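/- Let d be a symmetric real-valued function on {1,…,n} × {1,…,n} with d(i,i) = 0, where indices are taken modulo n. Define ω(i,j) = ½(d(i,j) + d(i+1,j+1) − d(i,j+1) − d(i+1,j)) for i < j (indices cyclic). Then for all k < l, d(k,l) = Σ ω(i,j), where the sum ranges over those pairs (i,j) whose associated circular split S_{ij} separates k from l (i.e., exactly one of k, l lies in the arc {i+1, i+2, …, j}). -/

import Mathlib

open Finset

private lemma tele (G : ℕ → ℝ) {u v : ℕ} (h : u ≤ v) :
    ∑ m ∈ Finset.Ico u v, (G m - G (m + 1)) = G u - G v := by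
  rw [Finset.sum_Ico_eq_sum_range]
  have h2 := Finset.sum_range_sub' (fun i => G (u + i)) (v - u)
  simp only [← add_assoc] at h2
  rw [h2, Nat.add_zero, Nat.add_sub_cancel' h]

private lemma sub_val {n : ℕ} (x c : Fin n) :
    (x - c).val = if c.val ≤ x.val then x.val - c.val else x.val + n - c.val := by
  have hx := x.isLt; have hc := c.isLt
  rw [Fin.sub_def]
  split_ifs with h
  · simp only
    have e : n - c.val + x.val = (x.val - c.val) + n := by omega
    rw [e, Nat.add_mod_right, Nat.mod_eq_of_lt (by omega)]
  · simp only
    rw [Nat.mod_eq_of_lt (by omega)]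
    omega

private lemma cond_iff {n : ℕ} [NeZero n] (k l i j : Fin n) (hkl : k < l) (hij : i < j) :
    (¬((k - (i + 1) ≤ j - (i + 1)) ↔ (l - (i + 1) ≤ j - (i + 1)))) ↔
      ((i < k ∧ k ≤ j ∧ j < l) ∨ (k ≤ i ∧ i < l ∧ l ≤ j)) := by
  have hi := i.isLt; have hj := j.isLt; have hk := k.isLt; have hl := l.isLt
  rw [Fin.lt_def] at hkl hij
  have h1 : (i + 1).val = i.val + 1 := by
    have e1 : (1 : Fin n).val = 1 := by
      rw [Fin.val_one']; exact Nat.mod_eq_of_lt (by omega)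
    rw [Fin.add_def]; simp only; rw [e1, Nat.mod_eq_of_lt (by omega)]
  simp only [Fin.le_def, Fin.lt_def, sub_val, h1]
  split_ifs <;> omega

open Fin.NatCast in
private noncomputable def DD {n : ℕ} [NeZero n] (d : Fin n → Fin n → ℝ) (a b : ℕ) : ℝ := d a b

private noncomputable def ww {n : ℕ} [NeZero n] (d : Fin n → Fin n → ℝ) (a b : ℕ) : ℝ :=
  (DD d a b + DD d (a + 1) (b + 1) - DD d a (b + 1) - DD d (a + 1) b) / 2

/-- Split decomposition identity: for any symmetric `d` vanishing on the
diagonal, `d k l` is the sum of the weights `ω i j` over the circular splits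
`S_{ij}` (the arc `{i+1, …, j}` versus its complement) which separate `k`
from `l`.  Indices are cyclic (addition and subtraction in `Fin n`). -/
theorem split_decomposition {n : ℕ} [NeZero n]
    (d : Fin n → Fin n → ℝ)
    (hsym : ∀ i j, d i j = d j i) (hdiag : ∀ i, d i i = 0) :
    let ω : Fin n → Fin n → ℝ := fun i j =>
      (d i j + d (i + 1) (j + 1) - d i (j + 1) - d (i + 1) j) / 2
    ∀ k l : Fin n, k < l →
      d k l = ∑ i, ∑ j ∈ univ.filter (fun j => i < j),
        (if ¬((k - (i + 1) ≤ j - (i + 1)) ↔ (l - (i + 1) ≤ j - (i + 1)))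
          then ω i j else 0) := by
  intro ω k l hkl
  have hω : ∀ i j : Fin n, ω i j =
      (d i j + d (i + 1) (j + 1) - d i (j + 1) - d (i + 1) j) / 2 := fun _ _ => rfl
  have hL := l.isLt
  have hKL : k.val < l.val := hkl
  have keyw : ∀ i j : Fin n, ω i j = ww d i.val j.val := by
    intro i j
    rw [hω]
    open Fin.NatCast in
    simp only [ww, DD, Nat.cast_add, Nat.cast_one, Fin.cast_val_eq_self]
  symm
  calc
    ∑ i, ∑ j ∈ univ.filter (fun j => i < j),
        (if ¬((k - (i + 1) ≤ j - (i + 1)) ↔ (l - (i + 1) ≤ j - (i + 1)))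
          then ω i j else 0)
      = ∑ i : Fin n, ∑ j : Fin n,
          ((if i < k ∧ k ≤ j ∧ j < l then ω i j else 0)
            + (if k ≤ i ∧ i < l ∧ l ≤ j then ω i j else 0)) := by
        refine Finset.sum_congr rfl fun i _ => ?_
        rw [Finset.sum_filter]
        refine Finset.sum_congr rfl fun j _ => ?_
        by_cases hij : i < j
        · rw [if_pos hij, if_congr (cond_iff k l i j hkl hij) rfl rfl]
          by_cases h1 : i < k ∧ k ≤ j ∧ j < l
          · have h2 : ¬(k ≤ i ∧ i < l ∧ l ≤ j) := by
              simp only [Fin.lt_def, Fin.le_def, not_and, not_le] at h1 ⊢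
              omega
            rw [if_pos (Or.inl h1), if_pos h1, if_neg h2, add_zero]
          · by_cases h2 : k ≤ i ∧ i < l ∧ l ≤ j
            · rw [if_pos (Or.inr h2), if_neg h1, if_pos h2, zero_add]
            · rw [if_neg (by tauto), if_neg h1, if_neg h2, add_zero]
        · rw [if_neg hij,
            if_neg (fun h : _ ∧ _ ∧ _ => hij (lt_of_lt_of_le h.1 h.2.1)),
            if_neg (fun h : _ ∧ _ ∧ _ => hij (lt_of_lt_of_le h.2.1 h.2.2)), add_zero]
    _ = (∑ i : Fin n, ∑ j : Fin n, (if i < k ∧ k ≤ j ∧ j < l then ω i j else 0))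
        + (∑ i : Fin n, ∑ j : Fin n, (if k ≤ i ∧ i < l ∧ l ≤ j then ω i j else 0)) := by
        rw [← Finset.sum_add_distrib]
        exact Finset.sum_congr rfl fun i _ => Finset.sum_add_distrib
    _ = d k l := by
        have hS1 : (∑ i : Fin n, ∑ j : Fin n, (if i < k ∧ k ≤ j ∧ j < l then ω i j else 0))
            = ∑ a ∈ range n, ∑ b ∈ range n,
                (if a < k.val ∧ k.val ≤ b ∧ b < l.val then ww d a b else 0) := by
          rw [← Fin.sum_univ_eq_sum_range (fun a => ∑ b ∈ range n,
            (if a < k.val ∧ k.val ≤ b ∧ b < l.val then ww d a b else 0)) n]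
          refine Finset.sum_congr rfl fun i _ => ?_
          rw [← Fin.sum_univ_eq_sum_range (fun b =>
            if i.val < k.val ∧ k.val ≤ b ∧ b < l.val then ww d i.val b else 0) n]
          refine Finset.sum_congr rfl fun j _ => ?_
          rw [keyw]
          exact if_congr Iff.rfl rfl rfl
        have hS2 : (∑ i : Fin n, ∑ j : Fin n, (if k ≤ i ∧ i < l ∧ l ≤ j then ω i j else 0))
            = ∑ a ∈ range n, ∑ b ∈ range n,
                (if k.val ≤ a ∧ a < l.val ∧ l.val ≤ b then ww d a b else 0) := by
          rw [← Fin.sum_univ_eq_sum_range (fun a => ∑ b ∈ range n,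
            (if k.val ≤ a ∧ a < l.val ∧ l.val ≤ b then ww d a b else 0)) n]
          refine Finset.sum_congr rfl fun i _ => ?_
          rw [← Fin.sum_univ_eq_sum_range (fun b =>
            if k.val ≤ i.val ∧ i.val < l.val ∧ l.val ≤ b then ww d i.val b else 0) n]
          refine Finset.sum_congr rfl fun j _ => ?_
          rw [keyw]
          exact if_congr Iff.rfl rfl rfl
        rw [hS1, hS2]
        -- inner telescoping, first sum
        have inner1 : ∀ a : ℕ,
            (∑ b ∈ range n, if a < k.val ∧ k.val ≤ b ∧ b < l.val then ww d a b else 0)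
            = if a < k.val then
                ((DD d a k.val - DD d (a+1) k.val) - (DD d a l.val - DD d (a+1) l.val))/2
              else 0 := by
          intro a
          by_cases ha : a < k.val
          · rw [if_pos ha]
            simp only [ha, true_and]
            rw [← Finset.sum_filter]
            have hfil : (range n).filter (fun b => k.val ≤ b ∧ b < l.val)
                = Finset.Ico k.val l.val := by
              ext b
              simp only [Finset.mem_filter, Finset.mem_range, Finset.mem_Ico]
              omega
            rw [hfil]
            calc ∑ b ∈ Finset.Ico k.val l.val, ww d a b
                = ∑ b ∈ Finset.Ico k.val l.val,
                    (((DD d a b - DD d (a+1) b) - (DD d a (b+1) - DD d (a+1) (b+1)))/2) := by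
                  refine Finset.sum_congr rfl fun b _ => ?_
                  simp only [ww]; ring
              _ = (∑ b ∈ Finset.Ico k.val l.val,
                    ((fun m => DD d a m - DD d (a+1) m) b
                      - (fun m => DD d a m - DD d (a+1) m) (b+1)))/2 := by
                  rw [Finset.sum_div]
              _ = ((DD d a k.val - DD d (a+1) k.val) - (DD d a l.val - DD d (a+1) l.val))/2 := by
                  rw [tele (fun m => DD d a m - DD d (a+1) m) (le_of_lt hKL)]
          · rw [if_neg ha]
            simp only [ha, false_and, if_false, Finset.sum_const_zero]
        have inner2 : ∀ a : ℕ,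
            (∑ b ∈ range n, if k.val ≤ a ∧ a < l.val ∧ l.val ≤ b then ww d a b else 0)
            = if k.val ≤ a ∧ a < l.val then
                ((DD d a l.val - DD d (a+1) l.val) - (DD d a n - DD d (a+1) n))/2
              else 0 := by
          intro a
          by_cases ha : k.val ≤ a ∧ a < l.val
          · rw [if_pos ha]
            simp only [ha.1, ha.2, true_and]
            rw [← Finset.sum_filter]
            have hfil : (range n).filter (fun b => l.val ≤ b) = Finset.Ico l.val n := by
              ext b
              simp only [Finset.mem_filter, Finset.mem_range, Finset.mem_Ico]
              omega
            rw [hfil]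
            calc ∑ b ∈ Finset.Ico l.val n, ww d a b
                = ∑ b ∈ Finset.Ico l.val n,
                    (((DD d a b - DD d (a+1) b) - (DD d a (b+1) - DD d (a+1) (b+1)))/2) := by
                  refine Finset.sum_congr rfl fun b _ => ?_
                  simp only [ww]; ring
              _ = (∑ b ∈ Finset.Ico l.val n,
                    ((fun m => DD d a m - DD d (a+1) m) b
                      - (fun m => DD d a m - DD d (a+1) m) (b+1)))/2 := by
                  rw [Finset.sum_div]
              _ = ((DD d a l.val - DD d (a+1) l.val) - (DD d a n - DD d (a+1) n))/2 := by
                  rw [tele (fun m => DD d a m - DD d (a+1) m) (le_of_lt hL)]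
          · rw [if_neg ha]
            rw [not_and_or] at ha
            rcases ha with ha | ha
            · refine Finset.sum_eq_zero fun b _ => if_neg ?_
              tauto
            · refine Finset.sum_eq_zero fun b _ => if_neg ?_
              tauto
        simp only [inner1, inner2]
        -- outer telescoping, first sum
        have outer1 : (∑ a ∈ range n, if a < k.val then
              ((DD d a k.val - DD d (a+1) k.val) - (DD d a l.val - DD d (a+1) l.val))/2
            else 0)
            = ((DD d 0 k.val - DD d 0 l.val) - (DD d k.val k.val - DD d k.val l.val))/2 := by
          rw [← Finset.sum_filter]
          have hfil : (range n).filter (fun a => a < k.val) = Finset.Ico 0 k.val := by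
            ext a
            simp only [Finset.mem_filter, Finset.mem_range, Finset.mem_Ico]
            omega
          rw [hfil]
          calc ∑ a ∈ Finset.Ico 0 k.val,
                ((DD d a k.val - DD d (a+1) k.val) - (DD d a l.val - DD d (a+1) l.val))/2
              = ∑ a ∈ Finset.Ico 0 k.val,
                  (((fun m => DD d m k.val - DD d m l.val) a
                    - (fun m => DD d m k.val - DD d m l.val) (a+1))/2) := by
                refine Finset.sum_congr rfl fun a _ => ?_
                simp only
                ring
            _ = (∑ a ∈ Finset.Ico 0 k.val,
                  ((fun m => DD d m k.val - DD d m l.val) a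
                    - (fun m => DD d m k.val - DD d m l.val) (a+1)))/2 := by
                rw [Finset.sum_div]
            _ = ((DD d 0 k.val - DD d 0 l.val) - (DD d k.val k.val - DD d k.val l.val))/2 := by
                rw [tele (fun m => DD d m k.val - DD d m l.val) (Nat.zero_le k.val)]
        have outer2 : (∑ a ∈ range n, if k.val ≤ a ∧ a < l.val then
              ((DD d a l.val - DD d (a+1) l.val) - (DD d a n - DD d (a+1) n))/2
            else 0)
            = ((DD d k.val l.val - DD d k.val n) - (DD d l.val l.val - DD d l.val n))/2 := by
          rw [← Finset.sum_filter]
          have hfil : (range n).filter (fun a => k.val ≤ a ∧ a < l.val)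
              = Finset.Ico k.val l.val := by
            ext a
            simp only [Finset.mem_filter, Finset.mem_range, Finset.mem_Ico]
            omega
          rw [hfil]
          calc ∑ a ∈ Finset.Ico k.val l.val,
                ((DD d a l.val - DD d (a+1) l.val) - (DD d a n - DD d (a+1) n))/2
              = ∑ a ∈ Finset.Ico k.val l.val,
                  (((fun m => DD d m l.val - DD d m n) a
                    - (fun m => DD d m l.val - DD d m n) (a+1))/2) := by
                refine Finset.sum_congr rfl fun a _ => ?_
                simp only
                ring
            _ = (∑ a ∈ Finset.Ico k.val l.val,
                  ((fun m => DD d m l.val - DD d m n) a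
                    - (fun m => DD d m l.val - DD d m n) (a+1)))/2 := by
                rw [Finset.sum_div]
            _ = ((DD d k.val l.val - DD d k.val n) - (DD d l.val l.val - DD d l.val n))/2 := by
                rw [tele (fun m => DD d m l.val - DD d m n) (le_of_lt hKL)]
        rw [outer1, outer2]
        have e1 : DD d k.val k.val = 0 := by
          simp only [DD, Fin.cast_val_eq_self]; exact hdiag k
        have e2 : DD d l.val l.val = 0 := by
          simp only [DD, Fin.cast_val_eq_self]; exact hdiag l
        have e3 : DD d k.val l.val = d k l := by
          simp only [DD, Fin.cast_val_eq_self]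
        have e4 : DD d k.val n = DD d 0 k.val := by
          simp only [DD, Fin.cast_val_eq_self, Fin.natCast_self, Nat.cast_zero]
          exact hsym k 0
        have e5 : DD d l.val n = DD d 0 l.val := by
          simp only [DD, Fin.cast_val_eq_self, Fin.natCast_self, Nat.cast_zero]
          exact hsym l 0
        rw [e1, e2, e3, e4, e5]
        ring
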